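/- arXiv:2410.02246 — 6 statements merged into one kernel-verified Lean document; each statement's English description precedes it below -/
import Mathlib

section
/- Let d ≥ 1, Δ > 0, 0 < ε < 1, 0 < δ < 1 and σ ≥ sqrt(2 * log(1.25/δ)) * Δ / ε. Then for any two points x, y ∈ ℝ^d with Euclidean distance ‖x − y‖₂ ≤ Δ and every measurable set O ⊆ ℝ^d, the isotropic Gaussian measures satisfy N(x, σ²I_d)(O) ≤ exp(ε) · N(y, σ²I_d)(O) + δ; i.e., the Gaussian mechanism with noise scale σ satisfies (ε,δ)-differential privacy for any function of ℓ₂-sensitivity Δ. -/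
open MeasureTheory ProbabilityTheory

/-- The isotropic Gaussian measure `N(m, σ²·I_d)` on `ℝ^d` (Euclidean space), defined as the
product of one-dimensional real Gaussian measures `gaussianReal (m i) σ²`. -/
noncomputable def isoGaussian (d : ℕ) (m : EuclideanSpace ℝ (Fin d)) (σ : ℝ) :
    Measure (EuclideanSpace ℝ (Fin d)) :=
  Measure.map (WithLp.toLp 2) (Measure.pi (fun i => gaussianReal (m i) ((σ ^ 2).toNNReal)))

namespace GaussDP

open Real

lemma pdf_mul (m₁ m₂ : ℝ) (v₁ v₂ : NNReal) (hv₁ : v₁ ≠ 0) (hv₂ : v₂ ≠ 0) (z u : ℝ) :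
    gaussianPDFReal m₁ v₁ u * gaussianPDFReal m₂ v₂ (z - u)
      = gaussianPDFReal (m₁ + m₂) (v₁ + v₂) z *
        gaussianPDFReal ((m₁ * v₂ + (z - m₂) * v₁) / (v₁ + v₂)) (v₁ * v₂ / (v₁ + v₂)) u := by
  have h1 : (0:ℝ) < v₁ := lt_of_le_of_ne v₁.coe_nonneg (by exact_mod_cast (Ne.symm hv₁))
  have h2 : (0:ℝ) < v₂ := lt_of_le_of_ne v₂.coe_nonneg (by exact_mod_cast (Ne.symm hv₂))
  have h12 : (0:ℝ) < v₁ + v₂ := by linarith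
  have hπ : (0:ℝ) < 2 * π := by positivity
  unfold gaussianPDFReal
  push_cast
  have hc : (√(2 * π * v₁))⁻¹ * (√(2 * π * v₂))⁻¹
      = (√(2 * π * ((v₁:ℝ) + v₂)))⁻¹ * (√(2 * π * ((v₁:ℝ) * v₂ / (v₁ + v₂))))⁻¹ := by
    rw [← mul_inv, ← mul_inv, ← Real.sqrt_mul (by positivity), ← Real.sqrt_mul (by positivity)]
    congr 1
    field_simp
  have he : -(u - m₁)^2 / (2 * (v₁:ℝ)) + -(z - u - m₂)^2 / (2 * (v₂:ℝ))
      = -(z - (m₁ + m₂))^2 / (2 * ((v₁:ℝ) + v₂))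
        + -(u - (m₁ * v₂ + (z - m₂) * v₁) / ((v₁:ℝ) + v₂))^2 / (2 * ((v₁:ℝ) * v₂ / (v₁ + v₂))) := by
    field_simp
    ring
  calc (√(2 * π * v₁))⁻¹ * rexp (-(u - m₁)^2 / (2 * v₁)) *
        ((√(2 * π * v₂))⁻¹ * rexp (-(z - u - m₂)^2 / (2 * v₂)))
      = (√(2 * π * v₁))⁻¹ * (√(2 * π * v₂))⁻¹ *
        rexp (-(u - m₁)^2 / (2 * (v₁:ℝ)) + -(z - u - m₂)^2 / (2 * (v₂:ℝ))) := by
        rw [Real.exp_add]; ring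
    _ = (√(2 * π * ((v₁:ℝ) + v₂)))⁻¹ * (√(2 * π * ((v₁:ℝ) * v₂ / (v₁ + v₂))))⁻¹ *
        (rexp (-(z - (m₁ + m₂))^2 / (2 * ((v₁:ℝ) + v₂))) *
         rexp (-(u - (m₁ * v₂ + (z - m₂) * v₁) / ((v₁:ℝ) + v₂))^2 /
            (2 * ((v₁:ℝ) * v₂ / (v₁ + v₂))))) := by
        rw [hc, he, Real.exp_add]
    _ = _ := by ring


lemma pdf_shift (m u : ℝ) (v : NNReal) (z : ℝ) :
    gaussianPDFReal (m + u) v z = gaussianPDFReal m v (z - u) := by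
  unfold gaussianPDFReal
  ring_nf

lemma measurable_pdf2 (m : ℝ) (v : NNReal) :
    Measurable (fun p : ℝ × ℝ => gaussianPDF (m + p.1) v p.2) := by
  simp only [gaussianPDF, gaussianPDFReal]
  fun_prop

lemma gaussianReal_conv (m₁ m₂ : ℝ) (v₁ v₂ : NNReal) :
    (gaussianReal m₁ v₁).conv (gaussianReal m₂ v₂) = gaussianReal (m₁ + m₂) (v₁ + v₂) := by
  by_cases hv₁ : v₁ = 0
  · subst hv₁
    rw [gaussianReal_zero_var, zero_add]
    unfold Measure.conv
    rw [Measure.dirac_prod, Measure.map_map (by fun_prop) (by fun_prop)]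
    have h : ((fun p : ℝ × ℝ => p.1 + p.2) ∘ (Prod.mk m₁)) = (fun x => m₁ + x) := rfl
    rw [h, gaussianReal_map_const_add, add_comm]
  by_cases hv₂ : v₂ = 0
  · subst hv₂
    rw [gaussianReal_zero_var, add_zero]
    unfold Measure.conv
    rw [Measure.prod_dirac, Measure.map_map (by fun_prop) (by fun_prop)]
    have h : ((fun p : ℝ × ℝ => p.1 + p.2) ∘ (fun x : ℝ => (x, m₂))) = (fun x => x + m₂) := rfl
    rw [h, gaussianReal_map_add_const]
  have hv : v₁ + v₂ ≠ 0 := fun h => hv₁ (by simpa using (add_eq_zero.mp h).1)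
  have hw : v₁ * v₂ / (v₁ + v₂) ≠ 0 := by
    refine div_ne_zero (mul_ne_zero hv₁ hv₂) hv
  ext s hs
  rw [Measure.conv, Measure.map_apply (by fun_prop) hs,
    Measure.prod_apply (measurable_add hs)]
  have key : ∀ u : ℝ, (gaussianReal m₂ v₂) (Prod.mk u ⁻¹' ((fun p : ℝ × ℝ => p.1 + p.2) ⁻¹' s))
      = ∫⁻ z in s, gaussianPDF (m₂ + u) v₂ z := by
    intro u
    have h : Prod.mk u ⁻¹' ((fun p : ℝ × ℝ => p.1 + p.2) ⁻¹' s) = (fun w => u + w) ⁻¹' s := rfl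
    rw [h, ← Measure.map_apply (by fun_prop) hs, gaussianReal_map_const_add,
      gaussianReal_apply _ hv₂]
  simp_rw [key]
  rw [gaussianReal_of_var_ne_zero _ hv₁,
    lintegral_withDensity_eq_lintegral_mul _ (measurable_gaussianPDF _ _)
      (by exact (measurable_pdf2 m₂ v₂).lintegral_prod_right')]
  simp only [Pi.mul_apply]
  have hmeas : Measurable (Function.uncurry fun u z => gaussianPDF m₁ v₁ u * gaussianPDF (m₂ + u) v₂ z) := by
    exact ((measurable_gaussianPDF m₁ v₁).comp measurable_fst).mul (measurable_pdf2 m₂ v₂)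
  calc ∫⁻ u, gaussianPDF m₁ v₁ u * ∫⁻ z in s, gaussianPDF (m₂ + u) v₂ z
      = ∫⁻ u, ∫⁻ z in s, gaussianPDF m₁ v₁ u * gaussianPDF (m₂ + u) v₂ z := by
        refine lintegral_congr fun u => ?_
        exact (lintegral_const_mul' _ _ ENNReal.ofReal_ne_top).symm
    _ = ∫⁻ z in s, ∫⁻ u, gaussianPDF m₁ v₁ u * gaussianPDF (m₂ + u) v₂ z := by
        exact lintegral_lintegral_swap hmeas.aemeasurable
    _ = ∫⁻ z in s, gaussianPDF (m₁ + m₂) (v₁ + v₂) z := by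
        refine lintegral_congr fun z => ?_
        have hpt : ∀ u, gaussianPDF m₁ v₁ u * gaussianPDF (m₂ + u) v₂ z
            = ENNReal.ofReal (gaussianPDFReal (m₁ + m₂) (v₁ + v₂) z) *
              gaussianPDF ((m₁ * v₂ + (z - m₂) * v₁) / (v₁ + v₂)) (v₁ * v₂ / (v₁ + v₂)) u := by
          intro u
          simp only [gaussianPDF]
          rw [← ENNReal.ofReal_mul (gaussianPDFReal_nonneg _ _ _),
            ← ENNReal.ofReal_mul (gaussianPDFReal_nonneg _ _ _),
            pdf_shift, pdf_mul m₁ m₂ v₁ v₂ hv₁ hv₂ z u]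
        simp_rw [hpt]
        rw [lintegral_const_mul' _ _ ENNReal.ofReal_ne_top,
          lintegral_gaussianPDF_eq_one _ hw, mul_one]
        rfl
    _ = gaussianReal (m₁ + m₂) (v₁ + v₂) s := (gaussianReal_apply _ hv s).symm


lemma conv_def (μ ν : Measure ℝ) [SFinite μ] [SFinite ν] :
    Measure.map (fun q : ℝ × ℝ => q.1 + q.2) (μ.prod ν) = μ.conv ν := rfl

lemma map_linear (n : ℕ) (m a : Fin n → ℝ) (v : NNReal) :
    Measure.map (fun z : Fin n → ℝ => ∑ i, a i * z i)
      (Measure.pi fun i => gaussianReal (m i) v)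
    = gaussianReal (∑ i, a i * m i) ((∑ i, (a i)^2).toNNReal * v) := by
  induction n with
  | zero =>
    rw [Measure.pi_of_empty, Measure.map_dirac' (by fun_prop)]
    simp
  | succ n ih =>
    have hp := measurePreserving_piFinSuccAbove (fun i : Fin (n+1) => gaussianReal (m i) v) 0
    have hps := hp.symm
    rw [← hps.map_eq, Measure.map_map (by fun_prop) (MeasurableEquiv.measurable _)]
    have hcomp : ((fun z : Fin (n+1) → ℝ => ∑ i, a i * z i) ∘
        ⇑(MeasurableEquiv.piFinSuccAbove (fun _ => ℝ) 0).symm)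
        = (fun q : ℝ × ℝ => q.1 + q.2) ∘
          (Prod.map (fun u : ℝ => a 0 * u) (fun w : Fin n → ℝ => ∑ j, a j.succ * w j)) := by
      funext p
      simp only [Function.comp_apply, MeasurableEquiv.piFinSuccAbove_symm_apply,
        Prod.map_apply, Fin.insertNthEquiv_apply]
      rw [Fin.sum_univ_succ]
      simp [Fin.insertNth_zero]
    rw [hcomp, ← Measure.map_map (by fun_prop) (by fun_prop),
      ← Measure.map_prod_map _ _ (by fun_prop) (by fun_prop)]
    simp only [Fin.zero_succAbove]
    rw [gaussianReal_map_const_mul, ih (fun j => m j.succ) (fun j => a j.succ)]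
    rw [conv_def, gaussianReal_conv]
    congr 1
    · rw [Fin.sum_univ_succ]
    · apply NNReal.coe_injective
      push_cast
      rw [Real.coe_toNNReal _ (by positivity), Real.coe_toNNReal _ (by positivity),
        Fin.sum_univ_succ]
      ring


lemma lintegral_pi_prod (n : ℕ) (μ : Fin n → Measure ℝ) [∀ i, SigmaFinite (μ i)]
    (h : Fin n → ℝ → ENNReal) (hm : ∀ i, Measurable (h i)) :
    ∫⁻ z, ∏ i, h i (z i) ∂Measure.pi μ = ∏ i, ∫⁻ u, h i u ∂μ i := by
  induction n with
  | zero =>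
    rw [Measure.pi_of_empty]
    simp
  | succ n ih =>
    have hps := (measurePreserving_piFinSuccAbove μ 0).symm
    have hmeas : Measurable (fun z : Fin (n+1) → ℝ => ∏ i, h i (z i)) :=
      Finset.measurable_prod _ (fun i _ => (hm i).comp (measurable_pi_apply i))
    rw [← hps.lintegral_comp hmeas]
    have hcomp : ∀ p : ℝ × (Fin n → ℝ),
        (∏ i, h i (((MeasurableEquiv.piFinSuccAbove (fun _ => ℝ) 0).symm p) i))
        = h 0 p.1 * ∏ j, h j.succ (p.2 j) := by
      intro p
      simp only [MeasurableEquiv.piFinSuccAbove_symm_apply, Fin.insertNthEquiv_apply]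
      rw [Fin.prod_univ_succ]
      simp [Fin.insertNth_zero]
    simp_rw [hcomp]
    rw [lintegral_prod _ (by
      exact (((hm 0).comp measurable_fst).mul
        (Finset.measurable_prod _ (fun j _ => (hm j.succ).comp
          ((measurable_pi_apply j).comp measurable_snd)))).aemeasurable)]
    simp only
    have htail : ∀ u : ℝ, ∫⁻ (w : Fin n → ℝ), h 0 u * ∏ j : Fin n, h j.succ (w j)
        ∂(Measure.pi fun j => μ ((0 : Fin (n+1)).succAbove j))
        = h 0 u * ∏ j : Fin n, ∫⁻ t, h j.succ t ∂(μ j.succ) := by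
      intro u
      have hprodmeas : Measurable (fun w : Fin n → ℝ => ∏ j : Fin n, h j.succ (w j)) := by
        exact Finset.measurable_prod _ (fun j _ => (hm j.succ).comp (measurable_pi_apply j))
      rw [lintegral_const_mul _ hprodmeas]
      congr 1
      have : (fun j : Fin n => μ ((0 : Fin (n+1)).succAbove j)) = fun j => μ j.succ := by
        funext j; rw [Fin.zero_succAbove]
      rw [this, ih (fun j => μ j.succ) (fun j => h j.succ) (fun j => hm j.succ)]
    simp_rw [htail]
    rw [lintegral_mul_const _ (hm 0), Fin.prod_univ_succ]

lemma oneDim (p q : ℝ) (v : NNReal) (hv : v ≠ 0) :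
    gaussianReal p v = (gaussianReal q v).withDensity
      (fun u => ENNReal.ofReal (rexp ((p - q) * u / v - (p^2 - q^2) / (2 * v)))) := by
  rw [gaussianReal_of_var_ne_zero _ hv, gaussianReal_of_var_ne_zero _ hv,
    ← withDensity_mul _ (measurable_gaussianPDF _ _) (by fun_prop)]
  congr 1
  funext u
  simp only [Pi.mul_apply, gaussianPDF]
  rw [← ENNReal.ofReal_mul (gaussianPDFReal_nonneg _ _ _)]
  congr 1
  unfold gaussianPDFReal
  have hv' : (0:ℝ) < v := lt_of_le_of_ne v.coe_nonneg (by exact_mod_cast (Ne.symm hv))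
  have hkey : rexp (-(u - q)^2/(2*(v:ℝ))) * rexp ((p - q) * u / (v:ℝ) - (p^2 - q^2)/(2*(v:ℝ)))
      = rexp (-(u - p)^2/(2*(v:ℝ))) := by
    rw [← Real.exp_add]
    congr 1
    field_simp
    ring
  rw [← hkey]
  ring


lemma pi_withDensity (d : ℕ) (x y : Fin d → ℝ) (v : NNReal) (hv : v ≠ 0) :
    Measure.pi (fun i => gaussianReal (x i) v)
      = (Measure.pi fun i => gaussianReal (y i) v).withDensity
          (fun z => ∏ i, ENNReal.ofReal
            (rexp ((x i - y i) * z i / v - ((x i)^2 - (y i)^2) / (2 * v)))) := by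
  have hrm : ∀ i : Fin d, Measurable (fun u : ℝ =>
      ENNReal.ofReal (rexp ((x i - y i) * u / v - ((x i)^2 - (y i)^2) / (2 * v)))) := by
    intro i; fun_prop
  refine Measure.pi_eq fun s hs => ?_
  rw [withDensity_apply _ (MeasurableSet.univ_pi hs), ← lintegral_indicator (MeasurableSet.univ_pi hs)]
  have hind : ∀ z : Fin d → ℝ, (Set.univ.pi s).indicator
      (fun z => ∏ i, ENNReal.ofReal (rexp ((x i - y i) * z i / v - ((x i)^2 - (y i)^2) / (2 * v)))) z
      = ∏ i, (s i).indicator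
          (fun u => ENNReal.ofReal (rexp ((x i - y i) * u / v - ((x i)^2 - (y i)^2) / (2 * v)))) (z i) := by
    intro z
    by_cases hz : z ∈ Set.univ.pi s
    · rw [Set.indicator_of_mem hz]
      refine Finset.prod_congr rfl fun i _ => ?_
      rw [Set.indicator_of_mem (hz i (Set.mem_univ i))]
    · rw [Set.indicator_of_notMem hz]
      obtain ⟨i, hi⟩ : ∃ i, z i ∉ s i := by simpa [Set.mem_pi] using hz
      exact (Finset.prod_eq_zero (Finset.mem_univ i)
        (by simp [Set.indicator_of_notMem hi])).symm
  simp_rw [hind]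
  rw [lintegral_pi_prod d _ _ (fun i => (hrm i).indicator (hs i))]
  refine Finset.prod_congr rfl fun i _ => ?_
  rw [lintegral_indicator (hs i), ← withDensity_apply _ (hs i), ← oneDim _ _ _ hv]


lemma gaussianReal_Ioi_mean (m : ℝ) (v : NNReal) (hv : v ≠ 0) :
    gaussianReal m v (Set.Ioi m) = 1/2 := by
  have hrefl : Measure.map (fun u : ℝ => 2*m + (-1) * u) (gaussianReal m v) = gaussianReal m v := by
    rw [show (fun u : ℝ => 2*m + (-1) * u) = (fun u : ℝ => 2*m + u) ∘ (fun u : ℝ => (-1) * u) from rfl,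
      ← Measure.map_map (by fun_prop) (by fun_prop), gaussianReal_map_const_mul,
      gaussianReal_map_const_add]
    congr 1
    · ring
    · apply NNReal.coe_injective; push_cast; norm_num
  have hIio : gaussianReal m v (Set.Iio m) = gaussianReal m v (Set.Ioi m) := by
    conv_rhs => rw [← hrefl]
    rw [Measure.map_apply (by fun_prop) measurableSet_Ioi]
    congr 1
    ext u
    simp only [Set.mem_preimage, Set.mem_Ioi, Set.mem_Iio]
    constructor <;> intro h <;> linarith
  have hsing : gaussianReal m v {m} = 0 :=
    gaussianReal_absolutelyContinuous m hv (volume_singleton)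
  have hunion : gaussianReal m v (Set.Iio m ∪ Set.Ioi m) = 1 := by
    have : Set.Iio m ∪ Set.Ioi m = {m}ᶜ := by
      ext u; simp [lt_or_lt_iff_ne]
    rw [this, measure_compl (measurableSet_singleton m) (measure_ne_top _ _), hsing,
      measure_univ, tsub_zero]
  rw [measure_union ((Set.Iio_disjoint_Ici le_rfl).mono_right Set.Ioi_subset_Ici_self) measurableSet_Ioi, hIio] at hunion
  have h2 : 2 * gaussianReal m v (Set.Ioi m) = 1 := by rw [two_mul]; exact hunion
  rw [ENNReal.eq_div_iff (by norm_num) (by norm_num)]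
  exact h2

lemma tail_le (t : ℝ) (ht : 0 ≤ t) :
    gaussianReal 0 1 (Set.Ioi t) ≤ ENNReal.ofReal (rexp (-t^2/2) / 2) := by
  rw [gaussianReal_apply 0 one_ne_zero]
  have hmono : ∀ z ∈ Set.Ioi t, gaussianPDF 0 1 z
      ≤ ENNReal.ofReal (rexp (-t^2/2)) * gaussianPDF t 1 z := by
    intro z hz
    simp only [Set.mem_Ioi] at hz
    rw [gaussianPDF, gaussianPDF, ← ENNReal.ofReal_mul (Real.exp_nonneg _)]
    apply ENNReal.ofReal_le_ofReal
    unfold gaussianPDFReal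
    rw [show rexp (-t^2/2) * ((√(2 * π * (1:NNReal)))⁻¹ * rexp (-(z - t)^2 / (2 * (1:NNReal))))
      = (√(2 * π * (1:NNReal)))⁻¹ * (rexp (-t^2/2) * rexp (-(z - t)^2 / (2 * (1:NNReal)))) from by ring,
      ← Real.exp_add]
    apply mul_le_mul_of_nonneg_left _ (by positivity)
    apply Real.exp_le_exp.mpr
    push_cast
    nlinarith
  calc ∫⁻ z in Set.Ioi t, gaussianPDF 0 1 z
      ≤ ∫⁻ z in Set.Ioi t, ENNReal.ofReal (rexp (-t^2/2)) * gaussianPDF t 1 z :=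
        setLIntegral_mono (measurable_const.mul (measurable_gaussianPDF t 1)) hmono
    _ = ENNReal.ofReal (rexp (-t^2/2)) * gaussianReal t 1 (Set.Ioi t) := by
        rw [lintegral_const_mul _ (measurable_gaussianPDF _ _), gaussianReal_apply t one_ne_zero]
    _ = ENNReal.ofReal (rexp (-t^2/2)) * ENNReal.ofReal (1/2) := by
        rw [gaussianReal_Ioi_mean t 1 one_ne_zero]
        congr 1
        rw [ENNReal.ofReal_div_of_pos (by norm_num)]
        simp
    _ = ENNReal.ofReal (rexp (-t^2/2) / 2) := by
        rw [← ENNReal.ofReal_mul (Real.exp_nonneg _)]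
        congr 1
        ring

lemma tail_neg (t : ℝ) (ht : t < 0) :
    gaussianReal 0 1 (Set.Ioi t) ≤ 1/2 + ENNReal.ofReal ((-t) * (2/5)) := by
  have hsplit : Set.Ioi t = Set.Ioc t 0 ∪ Set.Ioi (0:ℝ) := (Set.Ioc_union_Ioi_eq_Ioi ht.le).symm
  rw [hsplit]
  refine le_trans (measure_union_le _ _) ?_
  rw [gaussianReal_Ioi_mean 0 1 one_ne_zero, add_comm]
  refine add_le_add le_rfl ?_
  rw [gaussianReal_apply 0 one_ne_zero]
  have hpdf : ∀ z ∈ Set.Ioc t 0, gaussianPDF 0 1 z ≤ ENNReal.ofReal (2/5) := by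
    intro z _
    rw [gaussianPDF]
    apply ENNReal.ofReal_le_ofReal
    unfold gaussianPDFReal
    have h1 : rexp (-(z - 0)^2 / (2 * (1:NNReal))) ≤ 1 := by
      apply Real.exp_le_one_iff.mpr
      push_cast
      nlinarith
    have h2 : (√(2 * π * (1:NNReal)))⁻¹ ≤ 2/5 := by
      have hs : (5/2 : ℝ) ≤ √(2 * π * (1:NNReal)) := by
        have hsq := Real.sq_sqrt (show (0:ℝ) ≤ 2 * π * (1:NNReal) by positivity)
        push_cast at hsq ⊢
        nlinarith [Real.sqrt_nonneg (2 * π * 1), Real.pi_gt_d6]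
      calc (√(2 * π * (1:NNReal)))⁻¹ ≤ (5/2 : ℝ)⁻¹ := by
            apply inv_anti₀ (by norm_num) hs
        _ = 2/5 := by norm_num
    calc (√(2 * π * (1:NNReal)))⁻¹ * rexp (-(z - 0)^2 / (2 * (1:NNReal)))
        ≤ (√(2 * π * (1:NNReal)))⁻¹ * 1 := by
          apply mul_le_mul_of_nonneg_left h1 (by positivity)
      _ ≤ 2/5 := by rw [mul_one]; exact h2
  calc ∫⁻ z in Set.Ioc t 0, gaussianPDF 0 1 z
      ≤ ∫⁻ _ in Set.Ioc t 0, ENNReal.ofReal (2/5) := setLIntegral_mono (by fun_prop) hpdf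
    _ = ENNReal.ofReal (2/5) * volume (Set.Ioc t 0) := by rw [setLIntegral_const]
    _ = ENNReal.ofReal ((-t) * (2/5)) := by
        rw [Real.volume_Ioc, ← ENNReal.ofReal_mul (by norm_num)]
        congr 1
        ring


lemma log_twofive : (1/2 : ℝ) ≤ Real.log 2.5 := by
  rw [Real.le_log_iff_exp_le (by norm_num)]
  have h := Real.exp_one_lt_d9
  have h2 : rexp (1/2) ^ 2 = rexp 1 := by
    rw [sq, ← Real.exp_add]; norm_num
  nlinarith [Real.exp_pos (1/2 : ℝ)]

lemma log_onetwofive : (1/5 : ℝ) ≤ Real.log 1.25 := by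
  have h := Real.log_le_sub_one_of_pos (show (0:ℝ) < 0.8 by norm_num)
  have h2 : Real.log 1.25 = - Real.log 0.8 := by
    rw [← Real.log_inv]; norm_num
  linarith

lemma gaussianReal_Ioi_standardize (m C : ℝ) (w : NNReal) (hw : w ≠ 0) :
    gaussianReal m w (Set.Ioi C) = gaussianReal 0 1 (Set.Ioi ((C - m) / Real.sqrt w)) := by
  have hw0 : (0:ℝ) < w := lt_of_le_of_ne w.coe_nonneg (by exact_mod_cast (Ne.symm hw))
  have hsq : (0:ℝ) < Real.sqrt w := Real.sqrt_pos.mpr hw0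
  have hmap : Measure.map (fun u : ℝ => m + Real.sqrt w * u) (gaussianReal 0 1)
      = gaussianReal m w := by
    rw [show (fun u : ℝ => m + Real.sqrt w * u)
        = (fun u : ℝ => m + u) ∘ (fun u : ℝ => Real.sqrt w * u) from rfl,
      ← Measure.map_map (by fun_prop) (by fun_prop), gaussianReal_map_const_mul,
      gaussianReal_map_const_add]
    congr 1
    · ring
    · apply NNReal.coe_injective
      push_cast
      rw [mul_one, Real.sq_sqrt hw0.le]
  rw [← hmap, Measure.map_apply (by fun_prop) measurableSet_Ioi]
  congr 1
  ext u
  simp only [Set.mem_preimage, Set.mem_Ioi]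
  rw [div_lt_iff₀ hsq]
  constructor <;> intro h <;> nlinarith

set_option maxHeartbeats 1000000 in
lemma key_tail (ε δ a : ℝ) (hε : 0 < ε) (hε1 : ε < 1) (hδ : 0 < δ) (hδ1 : δ < 1)
    (ha : 0 < a) (haε : a * Real.sqrt (2 * Real.log (1.25/δ)) ≤ ε) :
    gaussianReal 0 1 (Set.Ioi (ε/a - a/2)) ≤ ENNReal.ofReal δ := by
  set L := Real.log (1.25/δ) with hLdef
  have hL0 : 0 < L := Real.log_pos (by rw [lt_div_iff₀ hδ]; linarith)
  set c := Real.sqrt (2*L) with hcdef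
  have hc0 : 0 < c := Real.sqrt_pos.mpr (by linarith)
  have hc2 : c^2 = 2*L := Real.sq_sqrt (by linarith)
  set t := ε/a - a/2 with htdef
  have ht0 : c - ε/(2*c) ≤ t := by
    have h1 : c ≤ ε / a := by
      rw [le_div_iff₀ ha]
      calc c * a = a * c := mul_comm _ _
        _ ≤ ε := haε
    have h2 : a/2 ≤ ε/(2*c) := by
      rw [div_le_div_iff₀ (by norm_num) (by positivity)]
      calc a * (2*c) = 2 * (a * c) := by ring
        _ ≤ 2 * ε := by linarith [haε]
        _ = ε * 2 := by ring
    have : a ≤ ε/c ∨ True := Or.inr trivial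
    simp only [htdef]
    linarith
  have hδL : δ = 1.25 * rexp (-L) := by
    rw [hLdef, Real.exp_neg, Real.exp_log (by positivity)]
    field_simp
  rcases le_or_gt 0 (c - ε/(2*c)) with h0 | h0
  · have htnn : 0 ≤ t := le_trans h0 ht0
    refine le_trans (tail_le t htnn) (ENNReal.ofReal_le_ofReal ?_)
    have hexpand : (c - ε/(2*c))^2 = c^2 - ε + ε^2/(4*c^2) := by
      field_simp
      ring
    have h2 : -(c - ε/(2*c))^2/2 + L ≤ Real.log 2.5 := by
      have hq : -(c - ε/(2*c))^2/2 + L = ε/2 - ε^2/(8*c^2) := by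
        rw [hexpand, hc2]
        field_simp
        ring
      have hnn : 0 ≤ ε^2/(8*c^2) := by positivity
      linarith [log_twofive]
    have hkey : rexp (-t^2/2) ≤ 2.5 * rexp (-L) := by
      have h1 : -t^2/2 ≤ -(c - ε/(2*c))^2/2 := by nlinarith
      calc rexp (-t^2/2) ≤ rexp (Real.log 2.5 - L) := Real.exp_le_exp.mpr (by linarith)
        _ = 2.5 * rexp (-L) := by
          rw [Real.exp_sub, Real.exp_log (by norm_num), Real.exp_neg]
          ring
    rw [hδL]
    linarith
  · have hδbig : 15/16 < δ := by
      rw [sub_neg] at h0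
      have h2c : 2*c^2 < ε := by
        have := (lt_div_iff₀ (by positivity : (0:ℝ) < 2*c)).mp h0
        nlinarith
      have hLe : L < 1/4 := by nlinarith
      have hexp : rexp (-(1/4) : ℝ) ≤ rexp (-L) ∨ True := Or.inr trivial
      have h34 : (3/4 : ℝ) ≤ rexp (-(1/4)) := by
        linarith [Real.add_one_le_exp (-(1/4) : ℝ)]
      have hmono : rexp (-(1/4) : ℝ) < rexp (-L) := Real.exp_lt_exp.mpr (by linarith)
      rw [hδL]
      nlinarith
    rcases le_or_gt 0 t with htn | htn
    · refine le_trans (tail_le t htn) (ENNReal.ofReal_le_ofReal ?_)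
      have h1 : rexp (-t^2/2) ≤ 1 := Real.exp_le_one_iff.mpr (by nlinarith)
      linarith
    · refine le_trans (tail_neg t htn) ?_
      clear_value L c t
      have hL15 : 1/5 ≤ L := by
        refine le_trans log_onetwofive ?_
        rw [hLdef]
        apply Real.log_le_log (by norm_num)
        rw [le_div_iff₀ hδ]
        nlinarith
      have hc35 : 3/5 ≤ c := by nlinarith
      have hmt : -t ≤ 5/6 := by
        have h1 : -t ≤ ε/(2*c) - c := by linarith
        have h2 : ε/(2*c) ≤ 1/(2*c) := by
          gcongr
        have h3 : 1/(2*c) ≤ 5/6 := by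
          rw [div_le_iff₀ (by positivity)]
          nlinarith
        linarith
      have hhalf : (1/2 : ENNReal) = ENNReal.ofReal (1/2) := by
        rw [ENNReal.ofReal_div_of_pos (by norm_num)]
        simp
      have hmt0 : (0:ℝ) ≤ -t := by linarith
      have h0t : (0:ℝ) ≤ (-t) * (2/5) := by nlinarith
      rw [hhalf, ← ENNReal.ofReal_add (by norm_num) h0t]
      apply ENNReal.ofReal_le_ofReal
      have hfin : (-t) * (2/5) ≤ 1/3 := by nlinarith
      linarith


end GaussDP

/-- **Gaussian mechanism.** If `σ ≥ √(2 log(1.25/δ)) · Δ / ε` with `0 < ε < 1`, `0 < δ < 1`,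
then for any two means at Euclidean distance at most `Δ`, the isotropic Gaussian measures are
`(ε,δ)`-indistinguishable: `N(x, σ²I)(O) ≤ e^ε · N(y, σ²I)(O) + δ` for all measurable `O`. -/
theorem gaussian_mechanism_dp (d : ℕ) (hd : 1 ≤ d) (Δ ε δ σ : ℝ)
    (hΔ : 0 < Δ) (hε : 0 < ε) (hε1 : ε < 1) (hδ : 0 < δ) (hδ1 : δ < 1)
    (hσ : Real.sqrt (2 * Real.log (1.25 / δ)) * Δ / ε ≤ σ)
    (x y : EuclideanSpace ℝ (Fin d)) (hxy : ‖x - y‖ ≤ Δ)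
    (O : Set (EuclideanSpace ℝ (Fin d))) (hO : MeasurableSet O) :
    isoGaussian d x σ O ≤ ENNReal.ofReal (Real.exp ε) * isoGaussian d y σ O
      + ENNReal.ofReal δ := by
  -- basic positivity
  have hL0 : 0 < Real.log (1.25 / δ) := Real.log_pos (by rw [lt_div_iff₀ hδ]; linarith)
  have hc0 : 0 < Real.sqrt (2 * Real.log (1.25 / δ)) := Real.sqrt_pos.mpr (by linarith)
  have hσ0 : 0 < σ := lt_of_lt_of_le (by positivity) hσ
  set V : NNReal := (σ ^ 2).toNNReal with hVdef
  have hV : V ≠ 0 := by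
    rw [hVdef, ← NNReal.coe_ne_zero, Real.coe_toNNReal _ (sq_nonneg σ)]
    positivity
  have hVv : (V : ℝ) = σ ^ 2 := Real.coe_toNNReal _ (sq_nonneg σ)
  by_cases hxyeq : x = y
  · subst hxyeq
    calc isoGaussian d x σ O = 1 * isoGaussian d x σ O := (one_mul _).symm
      _ ≤ ENNReal.ofReal (Real.exp ε) * isoGaussian d x σ O := by
          apply mul_le_mul_left
          rw [show (1 : ENNReal) = ENNReal.ofReal 1 by simp]
          exact ENNReal.ofReal_le_ofReal (Real.one_le_exp hε.le)
      _ ≤ _ := le_self_add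
  -- setup
  set v : ℝ := σ ^ 2 with hvdef
  have hv0 : 0 < v := by positivity
  set A : ℝ := ∑ i, (x i - y i)^2 with hAdef
  have hA0 : 0 < A := by
    have hne : ∃ i, x i ≠ y i := by
      by_contra hc
      push_neg at hc
      exact hxyeq (PiLp.ext hc)
    obtain ⟨i, hi⟩ := hne
    refine Finset.sum_pos' (fun j _ => sq_nonneg _) ⟨i, Finset.mem_univ i, ?_⟩
    have : x i - y i ≠ 0 := sub_ne_zero_of_ne hi
    positivity
  set s : ℝ := Real.sqrt A with hsdef
  have hs0 : 0 < s := Real.sqrt_pos.mpr hA0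
  have hs2 : s ^ 2 = A := Real.sq_sqrt hA0.le
  have hnorm : ‖x - y‖ = s := by
    rw [EuclideanSpace.norm_eq, hsdef, hAdef]
    congr 1
    refine Finset.sum_congr rfl fun i _ => ?_
    rw [show (x - y) i = x i - y i from rfl, Real.norm_eq_abs, sq_abs]
  have hsΔ : s ≤ Δ := hnorm ▸ hxy
  -- density representation
  set G : EuclideanSpace ℝ (Fin d) → ENNReal := fun z => ∏ i, ENNReal.ofReal
      (Real.exp ((x i - y i) * z i / v - ((x i)^2 - (y i)^2) / (2 * v))) with hGdef
  have hwd : isoGaussian d x σ = (isoGaussian d y σ).withDensity G := by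
    have h := GaussDP.pi_withDensity d (fun i => x i) (fun i => y i) V hV
    rw [hVv] at h
    unfold isoGaussian
    rw [h]
    ext s hs
    have hGm : Measurable G := by
      simp only [hGdef]
      exact Finset.measurable_prod _ (fun i _ => ENNReal.measurable_ofReal.comp
        (Real.measurable_exp.comp ((((measurable_pi_apply i).comp
          (WithLp.measurable_ofLp 2 _)).const_mul _).div_const _ |>.sub_const _)))
    rw [Measure.map_apply (WithLp.measurable_toLp 2 _) hs,
      withDensity_apply _ ((WithLp.measurable_toLp 2 _) hs), withDensity_apply _ hs,
      setLIntegral_map hs hGm (WithLp.measurable_toLp 2 _)]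
  -- the linear functional and bad set
  set T : EuclideanSpace ℝ (Fin d) → ℝ := fun z => ∑ i, (x i - y i) * z i with hTdef
  have hTmeas : Measurable T := by
    apply Finset.measurable_sum
    intro i _
    exact ((measurable_pi_apply i).comp (WithLp.measurable_ofLp 2 _)).const_mul _
  set C : ℝ := ε * v + (∑ i, ((x i)^2 - (y i)^2)) / 2 with hCdef
  set E : Set (EuclideanSpace ℝ (Fin d)) := T ⁻¹' (Set.Ioi C) with hEdef
  have hEmeas : MeasurableSet E := hTmeas measurableSet_Ioi
  -- bound on the complement
  have hGle : ∀ z ∈ Eᶜ, G z ≤ ENNReal.ofReal (Real.exp ε) := by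
    intro z hz
    simp only [hEdef, Set.mem_compl_iff, Set.mem_preimage, Set.mem_Ioi, not_lt] at hz
    have hprod : G z = ENNReal.ofReal
        (Real.exp (∑ i, ((x i - y i) * z i / v - ((x i)^2 - (y i)^2) / (2 * v)))) := by
      rw [Real.exp_sum, ENNReal.ofReal_prod_of_nonneg (fun i _ => Real.exp_nonneg _)]
    rw [hprod]
    apply ENNReal.ofReal_le_ofReal
    apply Real.exp_le_exp.mpr
    have hsum : ∑ i, ((x i - y i) * z i / v - ((x i)^2 - (y i)^2) / (2 * v))
        = (T z - (∑ i, ((x i)^2 - (y i)^2)) / 2) / v := by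
      rw [Finset.sum_sub_distrib]
      have e1 : ∑ i, (x i - y i) * z i / v = T z / v := (Finset.sum_div _ _ _).symm
      have e2 : ∑ i, (((x i)^2 - (y i)^2) / (2 * v))
          = (∑ i, ((x i)^2 - (y i)^2)) / 2 / v := by
        rw [div_div]
        exact (Finset.sum_div _ _ _).symm
      rw [e1, e2]
      exact (sub_div _ _ _).symm
    rw [hsum, div_le_iff₀ hv0]
    have : T z ≤ C := hz
    rw [hCdef] at this
    linarith
  -- measure of the bad set
  have hbad : isoGaussian d x σ E ≤ ENNReal.ofReal δ := by
    have hmap : Measure.map T (isoGaussian d x σ)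
        = gaussianReal (∑ i, (x i - y i) * x i) ((∑ i, (x i - y i)^2).toNNReal * V) := by
      unfold isoGaussian
      rw [Measure.map_map hTmeas (WithLp.measurable_toLp 2 _)]
      exact GaussDP.map_linear d (fun i => x i) (fun i => x i - y i) V
    have hW : ((∑ i, (x i - y i)^2).toNNReal * V) ≠ 0 :=
      mul_ne_zero (by rw [← NNReal.coe_ne_zero, Real.coe_toNNReal _ (by positivity)]; exact hA0.ne') hV
    have hE' : isoGaussian d x σ E = Measure.map T (isoGaussian d x σ) (Set.Ioi C) := by
      rw [Measure.map_apply hTmeas measurableSet_Ioi]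
    rw [hE', hmap, GaussDP.gaussianReal_Ioi_standardize _ _ _ hW]
    set aa : ℝ := s / σ with haadef
    have haa0 : 0 < aa := by positivity
    have hstd : (C - ∑ i, (x i - y i) * x i) /
          Real.sqrt ((((∑ i, (x i - y i)^2).toNNReal * V : NNReal) : ℝ))
        = ε / aa - aa / 2 := by
      have h1 : C - ∑ i, (x i - y i) * x i = ε * v - A / 2 := by
        have hzero : (∑ i, (((x i)^2 - (y i)^2) / 2 - (x i - y i) * x i + (x i - y i)^2 / 2)) = 0 :=
          Finset.sum_eq_zero fun i _ => by ring
        rw [Finset.sum_add_distrib, Finset.sum_sub_distrib] at hzero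
        have e1 : ∑ i, (((x i)^2 - (y i)^2) / 2) = (∑ i, ((x i)^2 - (y i)^2)) / 2 :=
          (Finset.sum_div _ _ _).symm
        have e2 : ∑ i, ((x i - y i)^2 / 2) = A / 2 := by
          rw [← Finset.sum_div, ← hAdef]
        rw [e1, e2] at hzero
        linarith [hzero]
      have h3 : (((∑ i, (x i - y i)^2).toNNReal * V : NNReal) : ℝ) = A * v := by
        push_cast
        rw [Real.coe_toNNReal _ (by positivity), hVv, ← hAdef]
      rw [h1, h3, show A * v = (s * σ)^2 by rw [← hs2, hvdef]; ring,
        Real.sqrt_sq (by positivity)]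
      rw [haadef, ← hs2]
      field_simp
      ring
    rw [hstd]
    apply GaussDP.key_tail ε δ aa hε hε1 hδ hδ1 haa0
    have hΔc : Real.sqrt (2 * Real.log (1.25 / δ)) * Δ ≤ σ * ε := by
      rw [div_le_iff₀ hε] at hσ
      linarith
    rw [haadef, div_mul_eq_mul_div, div_le_iff₀ hσ0]
    calc s * Real.sqrt (2 * Real.log (1.25 / δ))
        ≤ Δ * Real.sqrt (2 * Real.log (1.25 / δ)) := by
          apply mul_le_mul_of_nonneg_right hsΔ hc0.le
      _ ≤ σ * ε := by rw [mul_comm]; exact hΔc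
      _ = ε * σ := mul_comm _ _
  -- assemble
  calc isoGaussian d x σ O ≤ isoGaussian d x σ (O ∩ Eᶜ) + isoGaussian d x σ E := by
        have hsub : O ⊆ (O ∩ Eᶜ) ∪ E := by
          intro z hzO
          by_cases hzE : z ∈ E
          · exact Or.inr hzE
          · exact Or.inl ⟨hzO, hzE⟩
        exact le_trans (measure_mono hsub) (measure_union_le _ _)
    _ ≤ ENNReal.ofReal (Real.exp ε) * isoGaussian d y σ O + ENNReal.ofReal δ := by
        apply add_le_add ?_ hbad
        rw [hwd, withDensity_apply _ (hO.inter hEmeas.compl)]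
        calc ∫⁻ z in O ∩ Eᶜ, G z ∂(isoGaussian d y σ)
            ≤ ∫⁻ _ in O ∩ Eᶜ, ENNReal.ofReal (Real.exp ε) ∂(isoGaussian d y σ) := by
              apply setLIntegral_mono measurable_const
              intro z hz
              exact hGle z hz.2
          _ = ENNReal.ofReal (Real.exp ε) * isoGaussian d y σ (O ∩ Eᶜ) := setLIntegral_const _ _
          _ ≤ ENNReal.ofReal (Real.exp ε) * isoGaussian d y σ O := by
              apply mul_le_mul_right
              exact measure_mono Set.inter_subset_left
end

section
/- Let μ and ν be probability measures on a measurable space α, and let ε ≥ 0, δ ≥ 0 be such that μ(A) ≤ exp(ε)·ν(A) + δ for every measurable set A. Then for every measurable function g : α → ℝ with 0 ≤ g(x) ≤ 1 for all x, one has ∫ g dμ ≤ exp(ε) · ∫ g dν + δ. -/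
open MeasureTheory

/-- **From sets to [0,1]-valued test functions.** If `μ(A) ≤ e^ε ν(A) + δ` for all measurable
sets `A`, then `∫ g dμ ≤ e^ε ∫ g dν + δ` for every measurable `g` with values in `[0,1]`. -/
theorem integral_le_exp_mul_integral_add_of_dp {α : Type*} [MeasurableSpace α]
    (μ ν : Measure α) [IsProbabilityMeasure μ] [IsProbabilityMeasure ν]
    (ε δ : ℝ) (hε : 0 ≤ ε) (hδ : 0 ≤ δ)
    (hdp : ∀ A : Set α, MeasurableSet A →
      μ A ≤ ENNReal.ofReal (Real.exp ε) * ν A + ENNReal.ofReal δ)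
    (g : α → ℝ) (hg : Measurable g) (hg0 : ∀ x, 0 ≤ g x) (hg1 : ∀ x, g x ≤ 1) :
    ∫ x, g x ∂μ ≤ Real.exp ε * ∫ x, g x ∂ν + δ := by
  have hexp : (0:ℝ) ≤ Real.exp ε := (Real.exp_pos ε).le
  -- integrability of g
  have hintμ : Integrable g μ := by
    apply Integrable.mono' (integrable_const (1 : ℝ)) hg.aestronglyMeasurable
    exact Filter.Eventually.of_forall fun x => by
      rw [Real.norm_eq_abs, abs_of_nonneg (hg0 x)]; exact hg1 x
  have hintν : Integrable g ν := by
    apply Integrable.mono' (integrable_const (1 : ℝ)) hg.aestronglyMeasurable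
    exact Filter.Eventually.of_forall fun x => by
      rw [Real.norm_eq_abs, abs_of_nonneg (hg0 x)]; exact hg1 x
  -- layer-cake formulas
  have hμeq := hintμ.integral_eq_integral_Ioc_meas_le (M := 1)
    (Filter.Eventually.of_forall hg0) (Filter.Eventually.of_forall hg1)
  have hνeq := hintν.integral_eq_integral_Ioc_meas_le (M := 1)
    (Filter.Eventually.of_forall hg0) (Filter.Eventually.of_forall hg1)
  set F : ℝ → ℝ := fun t => (μ {a | t ≤ g a}).toReal with hF
  set G : ℝ → ℝ := fun t => (ν {a | t ≤ g a}).toReal with hG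
  -- measurability and integrability of F, G on Ioc 0 1
  have antiμ : Antitone fun t : ℝ => μ {a | t ≤ g a} := fun s t hst =>
    measure_mono fun a (h : t ≤ g a) => hst.trans h
  have antiν : Antitone fun t : ℝ => ν {a | t ≤ g a} := fun s t hst =>
    measure_mono fun a (h : t ≤ g a) => hst.trans h
  have measF : Measurable F := antiμ.measurable.ennreal_toReal
  have measG : Measurable G := antiν.measurable.ennreal_toReal
  have hintF : IntegrableOn F (Set.Ioc (0:ℝ) 1) := by
    apply Integrable.mono' (integrable_const (1 : ℝ)) measF.aestronglyMeasurable
    refine Filter.Eventually.of_forall fun t => ?_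
    rw [Real.norm_eq_abs, abs_of_nonneg ENNReal.toReal_nonneg]
    exact ENNReal.toReal_le_of_le_ofReal zero_le_one (by simpa using prob_le_one)
  have hintG : IntegrableOn G (Set.Ioc (0:ℝ) 1) := by
    apply Integrable.mono' (integrable_const (1 : ℝ)) measG.aestronglyMeasurable
    refine Filter.Eventually.of_forall fun t => ?_
    rw [Real.norm_eq_abs, abs_of_nonneg ENNReal.toReal_nonneg]
    exact ENNReal.toReal_le_of_le_ofReal zero_le_one (by simpa using prob_le_one)
  -- pointwise bound
  have hpt : ∀ t : ℝ, F t ≤ Real.exp ε * G t + δ := by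
    intro t
    have hms : MeasurableSet {a | t ≤ g a} := hg measurableSet_Ici
    have := hdp _ hms
    have hfin : ENNReal.ofReal (Real.exp ε) * ν {a | t ≤ g a} + ENNReal.ofReal δ ≠ ⊤ := by
      refine ENNReal.add_ne_top.2 ⟨ENNReal.mul_ne_top ENNReal.ofReal_ne_top (measure_ne_top _ _),
        ENNReal.ofReal_ne_top⟩
    calc F t ≤ (ENNReal.ofReal (Real.exp ε) * ν {a | t ≤ g a} + ENNReal.ofReal δ).toReal :=
          ENNReal.toReal_mono hfin this
      _ = Real.exp ε * G t + δ := by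
          rw [ENNReal.toReal_add (ENNReal.mul_ne_top ENNReal.ofReal_ne_top (measure_ne_top _ _))
            ENNReal.ofReal_ne_top, ENNReal.toReal_mul, ENNReal.toReal_ofReal hexp,
            ENNReal.toReal_ofReal hδ]
  -- put it together
  rw [hμeq, hνeq]
  calc ∫ t in Set.Ioc (0:ℝ) 1, F t
      ≤ ∫ t in Set.Ioc (0:ℝ) 1, (Real.exp ε * G t + δ) := by
        refine setIntegral_mono_on hintF ?_ measurableSet_Ioc fun t _ => hpt t
        exact (hintG.const_mul _).add (integrable_const δ)
    _ = Real.exp ε * (∫ t in Set.Ioc (0:ℝ) 1, G t) + δ := by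
        rw [integral_add (hintG.const_mul _) (integrable_const δ), integral_const_mul,
          integral_const]
        simp [Real.volume_Ioc]
end

section
/- Let μ and ν be probability measures on a measurable space α satisfying μ(A) ≤ exp(ε)·ν(A) + δ for every measurable set A (with ε ≥ 0, δ ≥ 0), and let κ be a Markov kernel from α to a measurable space β. Then the post-processed measures satisfy (μ.bind κ)(B) ≤ exp(ε) · (ν.bind κ)(B) + δ for every measurable set B ⊆ β. In other words, (ε,δ)-differential privacy is preserved under arbitrary randomized post-processing. -/
open MeasureTheory ProbabilityTheory

/-- **Post-processing theorem of differential privacy.** If `μ(A) ≤ e^ε ν(A) + δ` for every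
measurable set `A`, and `κ` is a Markov kernel, then the post-processed measures `μ.bind κ` and
`ν.bind κ` satisfy the same `(ε,δ)`-indistinguishability inequality. -/
theorem dp_post_processing {α β : Type*} [MeasurableSpace α] [MeasurableSpace β]
    (μ ν : Measure α) [IsProbabilityMeasure μ] [IsProbabilityMeasure ν]
    (ε δ : ℝ) (hε : 0 ≤ ε) (hδ : 0 ≤ δ)
    (hdp : ∀ A : Set α, MeasurableSet A →
      μ A ≤ ENNReal.ofReal (Real.exp ε) * ν A + ENNReal.ofReal δ)
    (κ : Kernel α β) [IsMarkovKernel κ]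
    (B : Set β) (hB : MeasurableSet B) :
    μ.bind κ B ≤ ENNReal.ofReal (Real.exp ε) * ν.bind κ B + ENNReal.ofReal δ := by
  set f : α → ℝ := fun x => (κ x B).toReal with hf_def
  have hf_meas : Measurable f := (κ.measurable_coe hB).ennreal_toReal
  have hf_le : ∀ x, f x ≤ 1 := fun x => by
    have h1 : κ x B ≤ 1 := prob_le_one
    simpa using ENNReal.toReal_mono (by norm_num) h1
  have hof : ∀ x, ENNReal.ofReal (f x) = κ x B := fun x =>
    ENNReal.ofReal_toReal (measure_ne_top _ _)
  have hlayer : ∀ (m : Measure α),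
      ∫⁻ x, κ x B ∂m = ∫⁻ t in Set.Ioi (0:ℝ), m {x | t < f x} := by
    intro m
    rw [← lintegral_eq_lintegral_meas_lt m (ae_of_all _ fun x => ENNReal.toReal_nonneg)
      hf_meas.aemeasurable]
    exact lintegral_congr fun x => (hof x).symm
  rw [Measure.bind_apply hB κ.measurable.aemeasurable,
    Measure.bind_apply hB κ.measurable.aemeasurable, hlayer μ, hlayer ν]
  have hA_meas : ∀ t : ℝ, MeasurableSet {x | t < f x} := fun t =>
    measurableSet_lt measurable_const hf_meas
  calc ∫⁻ t in Set.Ioi (0:ℝ), μ {x | t < f x}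
      ≤ ∫⁻ t in Set.Ioi (0:ℝ), (Set.Ioc (0:ℝ) 1).indicator
          (fun t => ENNReal.ofReal (Real.exp ε) * ν {x | t < f x} + ENNReal.ofReal δ) t := by
        apply setLIntegral_mono' measurableSet_Ioi
        intro t ht
        by_cases h1 : t ≤ 1
        · rw [Set.indicator_of_mem (Set.mem_Ioc.mpr ⟨ht, h1⟩)]
          exact hdp _ (hA_meas t)
        · rw [Set.indicator_of_notMem (by simp [Set.mem_Ioc, h1])]
          have : {x | t < f x} = ∅ := by
            ext x
            simp only [Set.mem_setOf_eq, Set.mem_empty_iff_false, iff_false, not_lt]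
            exact (hf_le x).trans (le_of_not_ge h1)
          simp [this]
    _ = ∫⁻ t in Set.Ioc (0:ℝ) 1,
          (ENNReal.ofReal (Real.exp ε) * ν {x | t < f x} + ENNReal.ofReal δ) := by
        rw [lintegral_indicator measurableSet_Ioc, Measure.restrict_restrict measurableSet_Ioc]
        congr 1
        rw [Set.Ioc_inter_Ioi]
        simp
    _ = ENNReal.ofReal (Real.exp ε) * (∫⁻ t in Set.Ioc (0:ℝ) 1, ν {x | t < f x})
          + ENNReal.ofReal δ * volume (Set.Ioc (0:ℝ) 1) := by
        have hanti : Antitone (fun t : ℝ => ν {x | t < f x}) := fun s t hst =>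
          measure_mono fun x hx => lt_of_le_of_lt hst hx
        rw [lintegral_add_right _ measurable_const, lintegral_const,
          lintegral_const_mul _ hanti.measurable, Measure.restrict_apply_univ]
    _ ≤ ENNReal.ofReal (Real.exp ε) * (∫⁻ t in Set.Ioi (0:ℝ), ν {x | t < f x})
          + ENNReal.ofReal δ := by
        have h1 : volume (Set.Ioc (0:ℝ) 1) = 1 := by simp [Real.volume_Ioc]
        rw [h1, mul_one]
        gcongr
        exact Set.Ioc_subset_Ioi_self
end

section
/- Let μ and ν be probability measures on a measurable space α with μ absolutely continuous with respect to ν, and set h(x) = (dμ/dν)(x) (the real-valued Radon–Nikodym derivative). Let (Ω, P) be a probability space and X : ℕ → Ω → α a sequence of independent, identically distributed random variables each with law ν, and let A ⊆ α be measurable. Then for P-almost every ω, (1/n) Σ_{i<n} 1_A(X_i(ω)) · h(X_i(ω)) → μ(A) as n → ∞. -/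
open MeasureTheory ProbabilityTheory Filter

/-- **SIR weighted empirical measure convergence.** Let `μ ≪ ν` be probability measures with
the importance weight `h = dμ/dν` (real-valued), let `X i` be i.i.d. with law `ν`, and let `A` be
measurable. Then almost surely `(1/n) Σ_{i<n} 1_A(X_i) · h(X_i) → μ(A)`. -/
theorem sir_weighted_indicator_tendsto {α Ω : Type*} [MeasurableSpace α] [MeasurableSpace Ω]
    (μ ν : Measure α) [IsProbabilityMeasure μ] [IsProbabilityMeasure ν] (hac : μ ≪ ν)
    (P : Measure Ω) [IsProbabilityMeasure P]
    (X : ℕ → Ω → α) (hX : ∀ i, Measurable (X i))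
    (hindep : iIndepFun X P)
    (hlaw : ∀ i, Measure.map (X i) P = ν)
    (A : Set α) (hA : MeasurableSet A) :
    ∀ᵐ ω ∂P, Tendsto
      (fun n : ℕ => (1 / (n : ℝ)) * ∑ i ∈ Finset.range n,
        A.indicator (fun _ => (1 : ℝ)) (X i ω) * (μ.rnDeriv ν (X i ω)).toReal)
      atTop (nhds (μ A).toReal) := by
  set f : α → ℝ := fun x => A.indicator (fun _ => (1 : ℝ)) x * (μ.rnDeriv ν x).toReal with hf
  have hfeq : f = A.indicator (fun x => (μ.rnDeriv ν x).toReal) := by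
    funext x
    by_cases hx : x ∈ A <;> simp [hf, hx]
  have hfm : Measurable f := by
    rw [hfeq]
    exact ((Measure.measurable_rnDeriv μ ν).ennreal_toReal).indicator hA
  have hfint : Integrable f ν := by
    rw [hfeq]
    exact (Measure.integrable_toReal_rnDeriv).indicator hA
  have hint0 : Integrable (f ∘ X 0) P := by
    rw [← integrable_map_measure (by rw [hlaw 0]; exact hfint.aestronglyMeasurable)
      (hX 0).aemeasurable, hlaw 0]
    exact hfint
  have hident : ∀ i, IdentDistrib (f ∘ X i) (f ∘ X 0) P P := by
    intro i
    have h1 : IdentDistrib (X i) (X 0) P P :=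
      ⟨(hX i).aemeasurable, (hX 0).aemeasurable, by rw [hlaw i, hlaw 0]⟩
    exact h1.comp hfm
  have hpair : Pairwise (Function.onFun (IndepFun · · P) fun i => f ∘ X i) := by
    intro i j hij
    exact (hindep.indepFun hij).comp hfm hfm
  have hE : ∫ ω, (f ∘ X 0) ω ∂P = (μ A).toReal := by
    rw [show ∫ ω, (f ∘ X 0) ω ∂P = ∫ x, f x ∂(Measure.map (X 0) P) from
      (integral_map (hX 0).aemeasurable (by rw [hlaw 0]; exact hfint.aestronglyMeasurable)).symm,
      hlaw 0, hfeq, integral_indicator hA, Measure.setIntegral_toReal_rnDeriv hac A, measureReal_def]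
  have := strong_law_ae (fun i => f ∘ X i) hint0 hpair hident
  rw [hE] at this
  filter_upwards [this] with ω hω
  convert hω using 2 with n
  simp [one_div, smul_eq_mul, Finset.mul_sum, hf]
end

section
/- Let μ and ν be probability measures on a measurable space α with μ absolutely continuous with respect to ν, and set h(x) = (dμ/dν)(x) (the real-valued Radon–Nikodym derivative). Let (Ω, P) be a probability space and X : ℕ → Ω → α a sequence of independent, identically distributed random variables each with law ν, and let A ⊆ α be measurable. Then for P-almost every ω, the self-normalized importance-sampling estimator converges to the target probability: (Σ_{i<n} 1_A(X_i(ω)) · h(X_i(ω))) / (Σ_{i<n} h(X_i(ω))) → μ(A) as n → ∞. -/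
open MeasureTheory ProbabilityTheory Filter

/-- **Consistency of Sampling-Importance Resampling (SIR).** Let `μ ≪ ν` be probability measures
with importance weight `h = dμ/dν` (real-valued), let `X i` be i.i.d. with law `ν`, and let `A`
be measurable. Then almost surely the self-normalized importance-sampling estimator
`(Σ_{i<n} 1_A(X_i)·h(X_i)) / (Σ_{i<n} h(X_i))` converges to `μ(A)`. -/
theorem sir_self_normalized_tendsto {α Ω : Type*} [MeasurableSpace α] [MeasurableSpace Ω]
    (μ ν : Measure α) [IsProbabilityMeasure μ] [IsProbabilityMeasure ν] (hac : μ ≪ ν)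
    (P : Measure Ω) [IsProbabilityMeasure P]
    (X : ℕ → Ω → α) (hX : ∀ i, Measurable (X i))
    (hindep : iIndepFun X P)
    (hlaw : ∀ i, Measure.map (X i) P = ν)
    (A : Set α) (hA : MeasurableSet A) :
    ∀ᵐ ω ∂P, Tendsto
      (fun n : ℕ =>
        (∑ i ∈ Finset.range n,
          A.indicator (fun _ => (1 : ℝ)) (X i ω) * (μ.rnDeriv ν (X i ω)).toReal)
        / (∑ i ∈ Finset.range n, (μ.rnDeriv ν (X i ω)).toReal))
      atTop (nhds (μ A).toReal) := by
  set h : α → ℝ := fun x => (μ.rnDeriv ν x).toReal with hh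
  set f : α → ℝ := fun x => A.indicator (fun _ => (1 : ℝ)) x * h x with hf
  have hmh : Measurable h := (Measure.measurable_rnDeriv μ ν).ennreal_toReal
  have hmf : Measurable f :=
    ((measurable_const.indicator hA).mul hmh)
  have hinth : Integrable h ν := Measure.integrable_toReal_rnDeriv
  have hintf : Integrable f ν := by
    apply hinth.mono' hmf.aestronglyMeasurable
    filter_upwards with x
    simp only [hf, norm_mul, Set.indicator]
    split_ifs with hx
    · simp [abs_of_nonneg ENNReal.toReal_nonneg, hh]
    · simp [abs_of_nonneg ENNReal.toReal_nonneg, hh, ENNReal.toReal_nonneg]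
  have hident : ∀ i, IdentDistrib (X i) (X 0) P P :=
    fun i => ⟨(hX i).aemeasurable, (hX 0).aemeasurable, by rw [hlaw i, hlaw 0]⟩
  have hintcomp : ∀ (g : α → ℝ), Measurable g → Integrable g ν →
      Integrable (g ∘ X 0) P := by
    intro g hg hgint
    rw [← hlaw 0] at hgint
    exact (integrable_map_measure hg.aestronglyMeasurable (hX 0).aemeasurable).mp hgint
  have hEcomp : ∀ (g : α → ℝ), Measurable g → ∫ ω, g (X 0 ω) ∂P = ∫ x, g x ∂ν := by
    intro g hg
    rw [← hlaw 0, integral_map (hX 0).aemeasurable hg.aestronglyMeasurable]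
  -- SLLN for the numerator
  have hnum : ∀ᵐ ω ∂P, Tendsto (fun n : ℕ =>
      (∑ i ∈ Finset.range n, f (X i ω)) / (n : ℝ)) atTop (nhds (μ A).toReal) := by
    have := strong_law_ae_real (fun i ω => f (X i ω)) (hintcomp f hmf hintf)
      (fun i j hij => ((hindep.indepFun hij).comp hmf hmf))
      (fun i => (hident i).comp hmf)
    have hE : ∫ ω, f (X 0 ω) ∂P = (μ A).toReal := by
      rw [hEcomp f hmf]
      have : ∫ x, f x ∂ν = ∫ x in A, h x ∂ν := by
        rw [← integral_indicator hA]
        congr 1 with x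
        simp only [hf, Set.indicator]
        split_ifs <;> simp
      rw [this, Measure.setIntegral_toReal_rnDeriv hac A, measureReal_def]
    rwa [hE] at this
  -- SLLN for the denominator
  have hden : ∀ᵐ ω ∂P, Tendsto (fun n : ℕ =>
      (∑ i ∈ Finset.range n, h (X i ω)) / (n : ℝ)) atTop (nhds 1) := by
    have := strong_law_ae_real (fun i ω => h (X i ω)) (hintcomp h hmh hinth)
      (fun i j hij => ((hindep.indepFun hij).comp hmh hmh))
      (fun i => (hident i).comp hmh)
    have hE : ∫ ω, h (X 0 ω) ∂P = 1 := by
      rw [hEcomp h hmh, hh, Measure.integral_toReal_rnDeriv hac]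
      simp
    rwa [hE] at this
  filter_upwards [hnum, hden] with ω h1 h2
  have := h1.div h2 one_ne_zero
  rw [div_one] at this
  apply this.congr'
  filter_upwards [eventually_ge_atTop 1] with n hn
  simp only [Pi.div_apply]
  rw [div_div_div_cancel_right₀ (by positivity : (n : ℝ) ≠ 0)]
end

section
/- Let μ₁ and ν₁ be probability measures on a measurable space R₁ with μ₁(A) ≤ exp(ε₁)·ν₁(A) + δ₁ for every measurable A, and let κ, κ' be Markov kernels from R₁ to R₂ such that for every r ∈ R₁ and every measurable B ⊆ R₂, κ(r)(B) ≤ exp(ε₂)·κ'(r)(B) + δ₂ (with ε₁, ε₂, δ₁, δ₂ ≥ 0). Then the composed (product) mechanisms satisfy, for every measurable set S ⊆ R₁ × R₂: (μ₁ ⊗ κ)(S) ≤ exp(ε₁ + ε₂) · (ν₁ ⊗ κ')(S) + (δ₁ + δ₂), where μ₁ ⊗ κ denotes the measure on R₁ × R₂ given by S ↦ ∫ κ(r)({y : (r,y) ∈ S}) dμ₁(r). That is, adaptive composition of an (ε₁,δ₁)-DP mechanism with an (ε₂,δ₂)-DP mechanism is (ε₁+ε₂, δ₁+δ₂)-DP.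 -/
open MeasureTheory ProbabilityTheory

open scoped ENNReal

lemma dp_lintegral_le {α : Type*} [MeasurableSpace α] (μ ν : Measure α)
    [IsProbabilityMeasure μ] (c d : ℝ)
    (h : ∀ A : Set α, MeasurableSet A → μ A ≤ ENNReal.ofReal c * ν A + ENNReal.ofReal d)
    (f : α → ℝ≥0∞) (hf : Measurable f) (hf1 : ∀ a, f a ≤ 1) :
    ∫⁻ a, f a ∂μ ≤ ENNReal.ofReal c * ∫⁻ a, f a ∂ν + ENNReal.ofReal d := by
  set g : α → ℝ := fun a => (f a).toReal with hg
  have hg_meas : Measurable g := hf.ennreal_toReal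
  have hfg : ∀ a, ENNReal.ofReal (g a) = f a := fun a =>
    ENNReal.ofReal_toReal ((lt_of_le_of_lt (hf1 a) (by norm_num)).ne)
  have hgle : ∀ a, g a ≤ 1 := fun a =>
    ENNReal.toReal_le_of_le_ofReal zero_le_one (by simpa using hf1 a)
  have key : ∀ (ρ : Measure α), ∫⁻ a, f a ∂ρ = ∫⁻ t in Set.Ioi (0:ℝ), ρ {a | t < g a} := by
    intro ρ
    rw [← lintegral_eq_lintegral_meas_lt ρ (Filter.Eventually.of_forall fun a =>
      ENNReal.toReal_nonneg) hg_meas.aemeasurable]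
    exact lintegral_congr fun a => (hfg a).symm
  have hsplit : ∀ (ρ : Measure α),
      ∫⁻ t in Set.Ioi (0:ℝ), ρ {a | t < g a} = ∫⁻ t in Set.Ioo (0:ℝ) 1, ρ {a | t < g a} := by
    intro ρ
    rw [show Set.Ioi (0:ℝ) = Set.Ioo 0 1 ∪ Set.Ici 1 from (Set.Ioo_union_Ici_eq_Ioi zero_lt_one).symm,
      lintegral_union measurableSet_Ici (by rw [Set.disjoint_left]; intro t ht hti; exact absurd hti.out (not_le.2 ht.2))]
    have : ∫⁻ t in Set.Ici (1:ℝ), ρ {a | t < g a} = 0 := by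
      rw [← lintegral_zero (μ := volume.restrict (Set.Ici (1:ℝ)))]
      apply setLIntegral_congr_fun measurableSet_Ici
      intro t ht
      have : {a | t < g a} = ∅ := by
        ext a; simp only [Set.mem_setOf_eq, Set.mem_empty_iff_false, iff_false, not_lt]
        exact (hgle a).trans ht
      simp [this]
    rw [this, add_zero]
  rw [key μ, hsplit μ]
  calc ∫⁻ t in Set.Ioo (0:ℝ) 1, μ {a | t < g a}
      ≤ ∫⁻ t in Set.Ioo (0:ℝ) 1, (ENNReal.ofReal c * ν {a | t < g a} + ENNReal.ofReal d) := by
        apply lintegral_mono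
        intro t
        exact h _ (hg_meas measurableSet_Ioi)
    _ = ENNReal.ofReal c * (∫⁻ t in Set.Ioo (0:ℝ) 1, ν {a | t < g a})
          + ENNReal.ofReal d * volume (Set.Ioo (0:ℝ) 1) := by
        rw [lintegral_add_right _ measurable_const, lintegral_const_mul' _ _ ENNReal.ofReal_ne_top,
          setLIntegral_const]
    _ ≤ ENNReal.ofReal c * ∫⁻ a, f a ∂ν + ENNReal.ofReal d := by
        gcongr
        · rw [key ν, hsplit ν]
        · simp [Real.volume_Ioo]

/-- **Basic (adaptive) composition of differential privacy.** If `(μ₁, ν₁)` are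
`(ε₁,δ₁)`-indistinguishable and the Markov kernels `κ, κ'` are pointwise
`(ε₂,δ₂)`-indistinguishable, then the composed mechanisms `μ₁ ⊗ₘ κ` and `ν₁ ⊗ₘ κ'` are
`(ε₁+ε₂, δ₁+δ₂)`-indistinguishable. -/
theorem dp_adaptive_composition {R₁ R₂ : Type*} [MeasurableSpace R₁] [MeasurableSpace R₂]
    (μ₁ ν₁ : Measure R₁) [IsProbabilityMeasure μ₁] [IsProbabilityMeasure ν₁]
    (ε₁ ε₂ δ₁ δ₂ : ℝ) (hε₁ : 0 ≤ ε₁) (hε₂ : 0 ≤ ε₂) (hδ₁ : 0 ≤ δ₁) (hδ₂ : 0 ≤ δ₂)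
    (h₁ : ∀ A : Set R₁, MeasurableSet A →
      μ₁ A ≤ ENNReal.ofReal (Real.exp ε₁) * ν₁ A + ENNReal.ofReal δ₁)
    (κ κ' : Kernel R₁ R₂) [IsMarkovKernel κ] [IsMarkovKernel κ']
    (h₂ : ∀ r : R₁, ∀ B : Set R₂, MeasurableSet B →
      κ r B ≤ ENNReal.ofReal (Real.exp ε₂) * κ' r B + ENNReal.ofReal δ₂)
    (S : Set (R₁ × R₂)) (hS : MeasurableSet S) :
    (μ₁ ⊗ₘ κ) S ≤ ENNReal.ofReal (Real.exp (ε₁ + ε₂)) * (ν₁ ⊗ₘ κ') S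
      + ENNReal.ofReal (δ₁ + δ₂) := by
  rw [Measure.compProd_apply hS, Measure.compProd_apply hS]
  set f : R₁ → ℝ≥0∞ := fun r =>
    min (κ r (Prod.mk r ⁻¹' S)) (ENNReal.ofReal (Real.exp ε₂) * κ' r (Prod.mk r ⁻¹' S)) with hf
  have hκmeas : Measurable fun r => κ r (Prod.mk r ⁻¹' S) :=
    Kernel.measurable_kernel_prodMk_left hS
  have hκ'meas : Measurable fun r => κ' r (Prod.mk r ⁻¹' S) :=
    Kernel.measurable_kernel_prodMk_left hS
  have hf_meas : Measurable f := hκmeas.min (hκ'meas.const_mul _)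
  have hf1 : ∀ r, f r ≤ 1 := fun r => (min_le_left _ _).trans prob_le_one
  have hb : ∀ r, κ r (Prod.mk r ⁻¹' S) ≤ f r + ENNReal.ofReal δ₂ := by
    intro r
    rcases le_total (κ r (Prod.mk r ⁻¹' S))
      (ENNReal.ofReal (Real.exp ε₂) * κ' r (Prod.mk r ⁻¹' S)) with h | h
    · rw [hf]; simp only [min_eq_left h]; exact le_self_add
    · rw [hf]; simp only [min_eq_right h]
      exact h₂ r _ (measurable_prodMk_left hS)
  have hfν : ∫⁻ r, f r ∂ν₁ ≤
      ENNReal.ofReal (Real.exp ε₂) * ∫⁻ r, κ' r (Prod.mk r ⁻¹' S) ∂ν₁ := by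
    rw [← lintegral_const_mul' _ _ ENNReal.ofReal_ne_top]
    exact lintegral_mono fun r => min_le_right _ _
  calc ∫⁻ r, κ r (Prod.mk r ⁻¹' S) ∂μ₁
      ≤ ∫⁻ r, (f r + ENNReal.ofReal δ₂) ∂μ₁ := lintegral_mono hb
    _ = ∫⁻ r, f r ∂μ₁ + ENNReal.ofReal δ₂ := by
        rw [lintegral_add_right _ measurable_const, lintegral_const, measure_univ, mul_one]
    _ ≤ (ENNReal.ofReal (Real.exp ε₁) * ∫⁻ r, f r ∂ν₁ + ENNReal.ofReal δ₁)
          + ENNReal.ofReal δ₂ := by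
        gcongr
        exact dp_lintegral_le μ₁ ν₁ _ _ h₁ f hf_meas hf1
    _ ≤ (ENNReal.ofReal (Real.exp ε₁) *
          (ENNReal.ofReal (Real.exp ε₂) * ∫⁻ r, κ' r (Prod.mk r ⁻¹' S) ∂ν₁)
          + ENNReal.ofReal δ₁) + ENNReal.ofReal δ₂ := by gcongr
    _ = ENNReal.ofReal (Real.exp (ε₁ + ε₂)) * ∫⁻ r, κ' r (Prod.mk r ⁻¹' S) ∂ν₁
          + ENNReal.ofReal (δ₁ + δ₂) := by
        rw [← mul_assoc, ← ENNReal.ofReal_mul (Real.exp_nonneg _), ← Real.exp_add,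
          add_assoc, ← ENNReal.ofReal_add hδ₁ hδ₂]
end
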